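/- Let t ≥ 3 and n ≥ 2t + 17 be integers, and let H be a 3-uniform hypergraph on n vertices with minimum degree δ₁(H) ≥ g(n,t) that contains no linear path of length t + 1. Let P = (x₀, x₁, ..., x_{2t}) be a linear path of length t in H. If there is some k ∈ [0, t−1] such that d_P(0, 2k+1) > 0 and d_P(2t, 2k+1) > 0, then d_P(0, 2k+1) + d_P(2t, 2k+1) ≤ 2. -/
import Mathlib


/-- The degree of a vertex `v` in a hypergraph with edge set `E`:
the number of edges containing `v`. -/
def hdegree {V : Type*} [DecidableEq V] (E : Finset (Finset V)) (v : V) : ℕ :=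
  (E.filter (fun e => v ∈ e)).card

/-- The hypergraph with edge set `E` contains a linear path of length `k`:
a collection of `k` (distinct) edges `e₁, …, e_k` such that `|eᵢ ∩ e_j| = 1`
if `|i - j| = 1` and `eᵢ ∩ e_j = ∅` otherwise. -/
def HasLinearPath {V : Type*} [DecidableEq V] (E : Finset (Finset V)) (k : ℕ) : Prop :=
  ∃ f : Fin k → Finset V, Function.Injective f ∧ (∀ i, f i ∈ E) ∧
    ∀ i j : Fin k, i ≠ j →
      (((i : ℕ) + 1 = j ∨ (j : ℕ) + 1 = i) → (f i ∩ f j).card = 1) ∧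
      (¬((i : ℕ) + 1 = j ∨ (j : ℕ) + 1 = i) → f i ∩ f j = ∅)

/-- `x = (x₀, x₁, …, x_{2t})` is a linear path of length `t` in the hypergraph with
edge set `E`: the `2t+1` vertices are distinct and `{x_{2i}, x_{2i+1}, x_{2i+2}} ∈ E`
for each `i ∈ [0, t-1]`. -/
def IsLinearPathSeq {V : Type*} [DecidableEq V] (E : Finset (Finset V)) (t : ℕ)
    (x : Fin (2 * t + 1) → V) : Prop :=
  Function.Injective x ∧
  ∀ i : Fin t,
    ({x ⟨2 * i, by have := i.isLt; omega⟩,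
      x ⟨2 * i + 1, by have := i.isLt; omega⟩,
      x ⟨2 * i + 2, by have := i.isLt; omega⟩} : Finset V) ∈ E

/-- `dP E x a b` is the number of vertices `y` outside the path `x` such that
`{x_a, x_b, y}` is an edge; this is `d_P(a, b)` in the paper. -/
def dP {V : Type*} [Fintype V] [DecidableEq V] (E : Finset (Finset V)) {t : ℕ}
    (x : Fin (2 * t + 1) → V) (a b : Fin (2 * t + 1)) : ℕ :=
  (Finset.univ.filter
    (fun y => (∀ i, y ≠ x i) ∧ ({x a, x b, y} : Finset V) ∈ E)).card

/-- The function `g(n,t)` from the paper: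
`g(n,t) = ((t-1)/2)n + (3/2)t² - (9/2)t + 6` for odd `t`, and
`g(n,t) = ((t-2)/2)n + (3/2)t² - (5/2)t + 6` for even `t`. -/
def gQ (n t : ℕ) : ℚ :=
  if Odd t then ((t : ℚ) - 1) / 2 * n + 3 / 2 * t ^ 2 - 9 / 2 * t + 6
  else ((t : ℚ) - 2) / 2 * n + 3 / 2 * t ^ 2 - 5 / 2 * t + 6

private lemma tri_single {V : Type*} [DecidableEq V] (p q r a b c w0 : V)
    (h1 : w0 = p ∨ w0 = q ∨ w0 = r) (h2 : w0 = a ∨ w0 = b ∨ w0 = c)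
    (h : ∀ w, (w = p ∨ w = q ∨ w = r) → (w = a ∨ w = b ∨ w = c) → w = w0) :
    ({p, q, r} : Finset V) ∩ {a, b, c} = {w0} := by
  ext w
  simp only [Finset.mem_inter, Finset.mem_insert, Finset.mem_singleton]
  constructor
  · rintro ⟨hw1, hw2⟩; exact h w hw1 hw2
  · rintro rfl; exact ⟨h1, h2⟩

private lemma tri_empty {V : Type*} [DecidableEq V] (p q r a b c : V)
    (h : ∀ w, (w = p ∨ w = q ∨ w = r) → (w = a ∨ w = b ∨ w = c) → False) :
    ({p, q, r} : Finset V) ∩ {a, b, c} = ∅ := by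
  rw [Finset.eq_empty_iff_forall_notMem]
  intro w hw
  simp only [Finset.mem_inter, Finset.mem_insert, Finset.mem_singleton] at hw
  exact h w hw.1 hw.2

private lemma haspath {V : Type*} [DecidableEq V] (E : Finset (Finset V))
    (hE : ∀ e ∈ E, e.card = 3)
    (t k : ℕ) (ht : 3 ≤ t) (hk : k ≤ t - 1)
    (x : Fin (2 * t + 1) → V) (hx : IsLinearPathSeq E t x)
    (y z : V) (hy : ∀ i, y ≠ x i) (hz : ∀ i, z ≠ x i) (hyz : y ≠ z)
    (hA : ({x ⟨0, by omega⟩, x ⟨2 * k + 1, by omega⟩, y} : Finset V) ∈ E)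
    (hB : ({x ⟨2 * t, by omega⟩, x ⟨2 * k + 1, by omega⟩, z} : Finset V) ∈ E) :
    HasLinearPath E (t + 1) := by
  classical
  obtain ⟨hxinj, hedges⟩ := hx
  set xv : ℕ → V := fun m => if h : m < 2 * t + 1 then x ⟨m, h⟩ else x ⟨0, by omega⟩ with hxvdef
  have hxv_eq : ∀ (m : ℕ) (h : m < 2 * t + 1), xv m = x ⟨m, h⟩ := by
    intro m h
    simp only [hxvdef]
    rw [dif_pos h]
  have hne : ∀ a b : ℕ, a ≤ 2 * t → b ≤ 2 * t → a ≠ b → xv a ≠ xv b := by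
    intro a b ha hb hab h
    rw [hxv_eq a (by omega), hxv_eq b (by omega)] at h
    exact hab (congrArg Fin.val (hxinj h))
  have hyx : ∀ m : ℕ, y ≠ xv m := by
    intro m
    simp only [hxvdef]
    split <;> apply hy
  have hzx : ∀ m : ℕ, z ≠ xv m := by
    intro m
    simp only [hxvdef]
    split <;> apply hz
  set E3 : ℕ → Finset V := fun a => {xv (2 * a), xv (2 * a + 1), xv (2 * a + 2)} with hE3def
  have hE3mem : ∀ a : ℕ, a < t → E3 a ∈ E := by
    intro a ha
    have h1 := hedges ⟨a, ha⟩
    simp only [hE3def]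
    rw [hxv_eq (2 * a) (by omega), hxv_eq (2 * a + 1) (by omega),
      hxv_eq (2 * a + 2) (by omega)]
    exact h1
  set A : Finset V := {xv 0, xv (2 * k + 1), y} with hAdef
  set B : Finset V := {xv (2 * t), xv (2 * k + 1), z} with hBdef
  have hAmem : A ∈ E := by
    simp only [hAdef]
    rw [hxv_eq 0 (by omega), hxv_eq (2 * k + 1) (by omega)]
    exact hA
  have hBmem : B ∈ E := by
    simp only [hBdef]
    rw [hxv_eq (2 * t) (by omega), hxv_eq (2 * k + 1) (by omega)]
    exact hB
  have adjE : ∀ a : ℕ, a + 2 ≤ t → (E3 a ∩ E3 (a + 1)).card = 1 := by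
    intro a ha
    have hval : E3 a ∩ E3 (a + 1) = {xv (2 * a + 2)} := by
      simp only [hE3def]
      rw [show 2 * (a + 1) = 2 * a + 2 from by ring]
      apply tri_single
      · tauto
      · tauto
      · rintro w (rfl | rfl | rfl) (h | h | h) <;>
          first
            | rfl
            | exact h
            | exact absurd h (hne _ _ (by omega) (by omega) (by omega))
    rw [hval, Finset.card_singleton]
  have farE : ∀ a b : ℕ, a + 2 ≤ b → b ≤ t - 1 → E3 a ∩ E3 b = ∅ := by
    intro a b h1 h2
    simp only [hE3def]
    apply tri_empty
    rintro w (rfl | rfl | rfl) (h | h | h) <;>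
      exact hne _ _ (by omega) (by omega) (by omega) h
  set F : ℕ → Finset V := fun m =>
    if m < k then E3 (k - 1 - m)
    else if m = k then A
    else if m = k + 1 then B
    else E3 (t + k + 1 - m) with hFdef
  have hF1 : ∀ m : ℕ, m < k → F m = E3 (k - 1 - m) := by
    intro m h; simp only [hFdef]
    split_ifs <;> first | rfl | (exfalso; omega)
  have hF2 : F k = A := by
    simp only [hFdef]
    split_ifs <;> first | rfl | (exfalso; omega)
  have hF3 : F (k + 1) = B := by
    simp only [hFdef]
    split_ifs <;> first | rfl | (exfalso; omega)
  have hF4 : ∀ m : ℕ, k + 2 ≤ m → F m = E3 (t + k + 1 - m) := by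
    intro m h; simp only [hFdef]
    split_ifs <;> first | rfl | (exfalso; omega)
  have hFmem : ∀ m : ℕ, m ≤ t → F m ∈ E := by
    intro m hm
    rcases Nat.lt_or_ge m k with h | h
    · rw [hF1 m h]; exact hE3mem _ (by omega)
    · rcases eq_or_ne m k with h2 | h2
      · rw [h2, hF2]; exact hAmem
      · rcases eq_or_ne m (k + 1) with h3 | h3
        · rw [h3, hF3]; exact hBmem
        · rw [hF4 m (by omega)]; exact hE3mem _ (by omega)
  have key : ∀ m n : ℕ, m < n → n ≤ t →
      ((m + 1 = n → (F m ∩ F n).card = 1) ∧ (m + 1 ≠ n → F m ∩ F n = ∅)) := by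
    intro m n hmn hn
    rcases Nat.lt_or_ge m k with hm | hm
    · rcases Nat.lt_or_ge n k with hn2 | hn2
      · -- both in the first (reversed) segment
        rw [hF1 m hm, hF1 n hn2, Finset.inter_comm]
        constructor
        · intro hadj
          rw [show k - 1 - m = (k - 1 - n) + 1 from by omega]
          exact adjE _ (by omega)
        · intro hadj
          exact farE _ _ (by omega) (by omega)
      · rcases eq_or_ne n k with hn3 | hn3
        · -- n = k : second edge is A
          rw [hF1 m hm, hn3, hF2]
          constructor
          · intro hadj
            have hval : E3 (k - 1 - m) ∩ A = {xv 0} := by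
              rw [show k - 1 - m = 0 from by omega]
              simp only [hE3def, hAdef]
              try rw [show 2 * 0 = 0 from by norm_num]
              try rw [show 2 * 0 + 1 = 1 from by norm_num]
              try rw [show 2 * 0 + 2 = 2 from by norm_num]
              try rw [show (0:ℕ) + 1 = 1 from by norm_num]
              try rw [show (0:ℕ) + 2 = 2 from by norm_num]
              apply tri_single
              · tauto
              · tauto
              · rintro w (rfl | rfl | rfl) (h | h | h) <;>
                  first
                    | rfl
                    | exact h
                    | exact absurd h (hne _ _ (by omega) (by omega) (by omega))
                    | exact absurd h (Ne.symm (hyx _))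
            rw [hval, Finset.card_singleton]
          · intro hadj
            simp only [hE3def, hAdef]
            apply tri_empty
            rintro w (rfl | rfl | rfl) (h | h | h) <;>
              first
                | exact hne _ _ (by omega) (by omega) (by omega) h
                | exact hyx _ h.symm
        · rcases eq_or_ne n (k + 1) with hn4 | hn4
          · -- n = k + 1 : second edge is B, not adjacent to the first segment
            rw [hF1 m hm, hn4, hF3]
            constructor
            · intro hadj; exact absurd hadj (by omega)
            · intro hadj
              simp only [hE3def, hBdef]
              apply tri_empty
              rintro w (rfl | rfl | rfl) (h | h | h) <;>
                first
                  | exact hne _ _ (by omega) (by omega) (by omega) h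
                  | exact hzx _ h.symm
          · -- n ≥ k + 2 : second edge in the last segment
            rw [hF1 m hm, hF4 n (by omega)]
            constructor
            · intro hadj; exact absurd hadj (by omega)
            · intro hadj; exact farE _ _ (by omega) (by omega)
    · rcases eq_or_ne m k with hm2 | hm2
      · -- m = k : first edge is A
        rcases eq_or_ne n (k + 1) with hn3 | hn3
        · rw [hm2, hF2, hn3, hF3]
          constructor
          · intro _
            have hval : A ∩ B = {xv (2 * k + 1)} := by
              simp only [hAdef, hBdef]
              apply tri_single
              · tauto
              · tauto
              · rintro w (rfl | rfl | rfl) (h | h | h) <;>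
                  first
                    | rfl
                    | exact h
                    | exact absurd h (hne _ _ (by omega) (by omega) (by omega))
                    | exact absurd h (Ne.symm (hzx _))
                    | exact absurd h (hyx _)
                    | exact absurd h hyz
            rw [hval, Finset.card_singleton]
          · intro hadj; exact absurd (by omega) hadj
        · -- n ≥ k + 2
          rw [hm2, hF2, hF4 n (by omega)]
          constructor
          · intro hadj; exact absurd hadj (by omega)
          · intro _
            simp only [hAdef, hE3def]
            apply tri_empty
            rintro w (rfl | rfl | rfl) (h | h | h) <;>
              first
                | exact hne _ _ (by omega) (by omega) (by omega) h
                | exact hyx _ h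
      · rcases eq_or_ne m (k + 1) with hm3 | hm3
        · -- m = k + 1 : first edge is B
          rw [hm3, hF3, hF4 n (by omega)]
          constructor
          · intro hadj
            have hval : B ∩ E3 (t + k + 1 - n) = {xv (2 * t)} := by
              rw [show t + k + 1 - n = t - 1 from by omega]
              simp only [hBdef, hE3def]
              rw [show 2 * (t - 1) = 2 * t - 2 from by omega,
                show 2 * t - 2 + 1 = 2 * t - 1 from by omega,
                show 2 * t - 2 + 2 = 2 * t from by omega]
              apply tri_single
              · tauto
              · tauto
              · rintro w (rfl | rfl | rfl) (h | h | h) <;>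
                  first
                    | rfl
                    | exact h
                    | exact absurd h (hne _ _ (by omega) (by omega) (by omega))
                    | exact absurd h (Ne.symm (hzx _))
                    | exact absurd h (hzx _)
            rw [hval, Finset.card_singleton]
          · intro hadj
            simp only [hBdef, hE3def]
            apply tri_empty
            rintro w (rfl | rfl | rfl) (h | h | h) <;>
              first
                | exact hne _ _ (by omega) (by omega) (by omega) h
                | exact hzx _ h
        · -- m ≥ k + 2 : both in the last segment
          rw [hF4 m (by omega), hF4 n (by omega), Finset.inter_comm]
          constructor
          · intro hadj
            rw [show t + k + 1 - m = (t + k + 1 - n) + 1 from by omega]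
            exact adjE _ (by omega)
          · intro hadj
            exact farE _ _ (by omega) (by omega)
  refine ⟨fun i => F (i : ℕ), ?_, fun i => hFmem (i : ℕ) (by have := i.isLt; omega), ?_⟩
  · -- injectivity
    have hcard3 : ∀ m : ℕ, m ≤ t → (F m).card = 3 := fun m hm => hE _ (hFmem m hm)
    have hlt : ∀ a b : Fin (t + 1), (a : ℕ) < (b : ℕ) → F (a : ℕ) ≠ F (b : ℕ) := by
      intro a b hab heq
      have h3 : (F (a : ℕ)).card = 3 := hcard3 _ (by have := a.isLt; omega)
      rcases eq_or_ne ((a : ℕ) + 1) (b : ℕ) with h | h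
      · have hh := (key (a : ℕ) (b : ℕ) hab (by have := b.isLt; omega)).1 h
        rw [← heq, Finset.inter_self] at hh
        omega
      · have hh := (key (a : ℕ) (b : ℕ) hab (by have := b.isLt; omega)).2 h
        rw [← heq, Finset.inter_self] at hh
        rw [hh, Finset.card_empty] at h3
        omega
    intro a b heq
    by_contra hne2
    rcases lt_trichotomy (a : ℕ) (b : ℕ) with h | h | h
    · exact hlt a b h heq
    · exact hne2 (Fin.ext h)
    · exact hlt b a h heq.symm
  · intro i j hij
    constructor
    · rintro (h | h)
      · exact (key (i : ℕ) (j : ℕ) (by omega) (by have := j.isLt; omega)).1 h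
      · rw [Finset.inter_comm]
        exact (key (j : ℕ) (i : ℕ) (by omega) (by have := i.isLt; omega)).1 h
    · intro hnadj
      push_neg at hnadj
      obtain ⟨h1, h2⟩ := hnadj
      have hij' : (i : ℕ) ≠ (j : ℕ) := fun hh => hij (Fin.ext hh)
      rcases Nat.lt_or_ge (i : ℕ) (j : ℕ) with h | h
      · exact (key (i : ℕ) (j : ℕ) h (by have := j.isLt; omega)).2 h1
      · rw [Finset.inter_comm]
        exact (key (j : ℕ) (i : ℕ) (by omega) (by have := i.isLt; omega)).2 h2

theorem dP_odd_sum_le_two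
    (t n : ℕ) (ht : t ≥ 3) (hn : n ≥ 2 * t + 17)
    (V : Type*) [Fintype V] [DecidableEq V] (hV : Fintype.card V = n)
    (E : Finset (Finset V)) (hE : ∀ e ∈ E, e.card = 3)
    (hdeg : ∀ v : V, gQ n t ≤ (hdegree E v : ℚ))
    (hfree : ¬ HasLinearPath E (t + 1))
    (x : Fin (2 * t + 1) → V) (hx : IsLinearPathSeq E t x)
    (k : ℕ) (hk : k ≤ t - 1)
    (h0 : 0 < dP E x ⟨0, by omega⟩ ⟨2 * k + 1, by omega⟩)
    (h2t : 0 < dP E x ⟨2 * t, by omega⟩ ⟨2 * k + 1, by omega⟩) :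
    dP E x ⟨0, by omega⟩ ⟨2 * k + 1, by omega⟩ +
      dP E x ⟨2 * t, by omega⟩ ⟨2 * k + 1, by omega⟩ ≤ 2 := by
  by_contra hcon
  push_neg at hcon
  have hsplit : 2 ≤ dP E x ⟨0, by omega⟩ ⟨2 * k + 1, by omega⟩ ∨
      2 ≤ dP E x ⟨2 * t, by omega⟩ ⟨2 * k + 1, by omega⟩ := by omega
  rcases hsplit with hbig | hbig
  · have h2t' := h2t
    simp only [dP] at hbig h2t'
    obtain ⟨y1, hy1, y2, hy2, hy12⟩ := Finset.one_lt_card.mp (lt_of_lt_of_le one_lt_two hbig)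
    obtain ⟨zz, hzz⟩ := Finset.card_pos.mp h2t'
    simp only [Finset.mem_filter, Finset.mem_univ, true_and] at hy1 hy2 hzz
    by_cases hc : y1 = zz
    · exact hfree (haspath E hE t k ht hk x hx y2 zz hy2.1 hzz.1
        (fun hh => hy12 (hc.trans hh.symm)) hy2.2 hzz.2)
    · exact hfree (haspath E hE t k ht hk x hx y1 zz hy1.1 hzz.1 hc hy1.2 hzz.2)
  · have h0' := h0
    simp only [dP] at hbig h0'
    obtain ⟨z1, hz1, z2, hz2, hz12⟩ := Finset.one_lt_card.mp (lt_of_lt_of_le one_lt_two hbig)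
    obtain ⟨yy, hyy⟩ := Finset.card_pos.mp h0'
    simp only [Finset.mem_filter, Finset.mem_univ, true_and] at hz1 hz2 hyy
    by_cases hc : z1 = yy
    · exact hfree (haspath E hE t k ht hk x hx yy z2 hyy.1 hz2.1
        (fun hh => hz12 (hc.trans hh)) hyy.2 hz2.2)
    · exact hfree (haspath E hE t k ht hk x hx yy z1 hyy.1 hz1.1
        (fun hh => hc hh.symm) hyy.2 hz1.2)
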